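/- Let C be a small category with Grothendieck topology J, T a small category, and τ : C ⥤ T a functor. Suppose T carries a symmetric monoidal structure (⊗, e) such that for every object t of T, precomposition with the functor t ⊗ − preserves Linton models: if N is a Linton model then so is the presheaf s ↦ N(t ⊗ s). Then for every presheaf M on T and every Linton model N, the presheaf [M,N] on T defined by [M,N](t) = Nat(M, N(− ⊗ t)) — the set of natural transformations from M to the presheaf s ↦ N(s ⊗ t), with the evident contravariant functoriality in t — is again a Linton model. (In other words, Mod^T is an exponential ideal in Psh(T) for the internal hom of the Day convolution.) -/

import Mathlib

open CategoryTheory MonoidalCategory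

universe u

variable {T : Type u} [SmallCategory T] [MonoidalCategory T]

/-- The internal hom for the Day convolution on presheaves over a monoidal category `T`:
`[M, N] (t) = Nat (M, N (− ⊗ t))`, contravariantly functorial in `t`. -/
@[simps]
def dayHom (M N : Tᵒᵖ ⥤ Type u) : Tᵒᵖ ⥤ Type u where
  obj t := M ⟶ (((curriedTensor T).flip.obj t.unop).op ⋙ N)
  map f := TypeCat.ofHom fun α => α ≫ Functor.whiskerRight (NatTrans.op ((curriedTensor T).flip.map f.unop)) N

/-- Let `τ : C ⥤ T` be a Linton theory over the site `(C, J)`, and let `T`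
carry a symmetric monoidal structure such that precomposing with `t ⊗ −` preserves Linton
models.  Then for any presheaf `M` on `T` and any Linton model `N`, the Day-convolution
internal hom `[M, N]` is again a Linton model: `Mod^T` is an exponential ideal in `Psh(T)`. -/
theorem linton_models_exponential_ideal [SymmetricCategory T]
    {C : Type u} [SmallCategory C] (J : GrothendieckTopology C) (τ : C ⥤ T)
    (h : ∀ (t : T) (N : Tᵒᵖ ⥤ Type u), Presieve.IsSheaf J (τ.op ⋙ N) →
      Presieve.IsSheaf J (τ.op ⋙ (((curriedTensor T).obj t).op ⋙ N)))
    (M N : Tᵒᵖ ⥤ Type u) (hN : Presieve.IsSheaf J (τ.op ⋙ N)) :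
    Presieve.IsSheaf J (τ.op ⋙ dayHom M N) := by
  intro X S hS x hx
  -- For each `s : Tᵒᵖ`, the presheaf `c ↦ N (s ⊗ τ c)` is a sheaf for `S`.
  have hQ : ∀ s : Tᵒᵖ, Presieve.IsSheafFor
      (τ.op ⋙ (((curriedTensor T).obj s.unop).op ⋙ N)) S.arrows :=
    fun s => h s.unop N hN S hS
  -- Pointwise families of elements.
  let y : ∀ (s : Tᵒᵖ), M.obj s →
      Presieve.FamilyOfElements (τ.op ⋙ (((curriedTensor T).obj s.unop).op ⋙ N)) S.arrows :=
    fun s m Y f hf => (x f hf).app s m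
  have hy : ∀ s m, (y s m).Compatible := by
    intro s m Y₁ Y₂ Z g₁ g₂ f₁ f₂ h₁ h₂ hcomm
    exact congrArg (fun α => α.app s m) (hx g₁ g₂ h₁ h₂ hcomm)
  have key := fun s m => hQ s (y s m) (hy s m)
  choose n hn hun using key
  -- Amalgamation condition restated.
  have hn' : ∀ (s : Tᵒᵖ) (m : M.obj s) ⦃Y : C⦄ (f : Y ⟶ X) (hf : S f),
      N.map (s.unop ◁ τ.map f).op (n s m) = (x f hf).app s m :=
    fun s m Y f hf => hn s m f hf
  refine ⟨{ app := fun s => TypeCat.ofHom fun m => n s m, naturality := ?_ }, ?_, ?_⟩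
  · -- naturality of the glued transformation
    intro s s' g
    ext m
    dsimp only [Functor.comp_obj, Functor.comp_map, types_comp_apply]
    refine (hun s' (M.map g m) _ ?_).symm.trans rfl
    intro Y f hf
    show N.map (s'.unop ◁ τ.map f).op
        (N.map (((curriedTensor T).flip.obj (Opposite.unop (Opposite.op (τ.obj X)))).map g.unop).op
          (n s m)) = (x f hf).app s' (M.map g m)
    have h1 : (s'.unop ◁ τ.map f) ≫ (g.unop ▷ τ.obj X)
        = (g.unop ▷ τ.obj Y) ≫ (s.unop ◁ τ.map f) := by
      simp [whisker_exchange]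
    calc N.map (s'.unop ◁ τ.map f).op (N.map (g.unop ▷ τ.obj X).op (n s m))
        = N.map ((s'.unop ◁ τ.map f) ≫ (g.unop ▷ τ.obj X)).op (n s m) := by
          simp [FunctorToTypes.map_comp_apply]
      _ = N.map ((g.unop ▷ τ.obj Y) ≫ (s.unop ◁ τ.map f)).op (n s m) := by rw [h1]
      _ = N.map (g.unop ▷ τ.obj Y).op (N.map (s.unop ◁ τ.map f).op (n s m)) := by
          simp [FunctorToTypes.map_comp_apply]
      _ = N.map (g.unop ▷ τ.obj Y).op ((x f hf).app s m) := by rw [hn' s m f hf]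
      _ = (x f hf).app s' (M.map g m) := by
          have := (x f hf).naturality_apply g m
          exact this.symm
  · -- it is an amalgamation
    intro Y f hf
    refine NatTrans.ext (funext fun s => ConcreteCategory.hom_ext _ _ fun m => ?_)
    exact hn' s m f hf
  · -- uniqueness
    intro t' ht'
    refine NatTrans.ext (funext fun s => ConcreteCategory.hom_ext _ _ fun m => ?_)
    refine hun s m (t'.app s m) ?_
    intro Y f hf
    exact congrArg (fun α => α.app s m) (ht' f hf)
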